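/- Every bistable graph with at least two vertices is biconnected, i.e., it has no cutvertex. -/
import Mathlib


/-- `S` is an independent set in `G`. -/
def IsIndepSet {V : Type*} (G : SimpleGraph V) (S : Finset V) : Prop :=
  ∀ u ∈ S, ∀ v ∈ S, ¬ G.Adj u v

/-- `G` is bistable: connected, bipartite with partite sets `A` and `B`, both of which are
independent and of equal size, and every independent set of maximum size equals `A` or `B`. -/
def IsBistable {V : Type*} [Fintype V] [DecidableEq V] (G : SimpleGraph V) : Prop :=
  G.Connected ∧ ∃ A B : Finset V,
    A ∪ B = Finset.univ ∧ Disjoint A B ∧ A ≠ B ∧ A.card = B.card ∧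
    IsIndepSet G A ∧ IsIndepSet G B ∧
    (∀ S : Finset V, IsIndepSet G S → A.card ≤ S.card → S = A ∨ S = B)

/-- Every vertex `w ≠ v` can reach, inside `G - v`, some neighbor of `v`. -/
lemma reach_nbr' {V : Type*} (G : SimpleGraph V) (v : V) :
    ∀ (w z : V) (_ : G.Walk w z) (hz : z = v) (hw : w ≠ v),
      ∃ b, ∃ hb : b ≠ v, G.Adj v b ∧
        (G.induce {w : V | w ≠ v}).Reachable ⟨w, hw⟩ ⟨b, hb⟩ := by
  intro w z p
  induction p with
  | nil => intro hz hw; exact absurd hz hw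
  | @cons a b c h p ih =>
    intro hz hw
    by_cases hb : b = v
    · exact ⟨a, hw, (hb ▸ h).symm, SimpleGraph.Reachable.refl _⟩
    · obtain ⟨b', hb', hadj, hr⟩ := ih hz hb
      exact ⟨b', hb', hadj,
        (SimpleGraph.Adj.reachable
          (show (G.induce {w : V | w ≠ v}).Adj ⟨a, hw⟩ ⟨b, hb⟩ from h)).trans hr⟩

lemma reach_nbr {V : Type*} (G : SimpleGraph V) (v : V)
    (w : V) (p : G.Walk w v) (hw : w ≠ v) :
      ∃ b, ∃ hb : b ≠ v, G.Adj v b ∧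
        (G.induce {w : V | w ≠ v}).Reachable ⟨w, hw⟩ ⟨b, hb⟩ :=
  reach_nbr' G v w v p rfl hw

lemma bistable_aux {V : Type*} [Fintype V] [DecidableEq V]
    (G : SimpleGraph V) (hconn : G.Connected) (A B : Finset V)
    (hU : A ∪ B = Finset.univ) (hD : Disjoint A B)
    (hmax : ∀ S : Finset V, IsIndepSet G S → A.card ≤ S.card → S = A ∨ S = B)
    (hIA : IsIndepSet G A) (hIB : IsIndepSet G B) (hAB : A.card = B.card)
    (hcard : 2 ≤ Fintype.card V) (v : V) (hv : v ∈ A) :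
    ((G.induce {w : V | w ≠ v})).Connected := by
  classical
  by_contra hnc
  -- V \ {v} is nonempty
  obtain ⟨u, huv⟩ := Fintype.exists_ne_of_one_lt_card (by omega) v
  have hne' : Nonempty {w : V | w ≠ v} := ⟨⟨u, huv⟩⟩
  have hnp : ¬ (G.induce {w : V | w ≠ v}).Preconnected := fun hp => hnc ⟨hp⟩
  rw [SimpleGraph.Preconnected] at hnp
  push_neg at hnp
  obtain ⟨x, y, hxy⟩ := hnp
  set G' := G.induce {w : V | w ≠ v} with hG'
  -- the component of x
  set C : Finset V :=
    Finset.univ.filter (fun w => ∃ h : w ≠ v, G'.Reachable x ⟨w, h⟩) with hC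
  have hCmem : ∀ w : V, w ∈ C ↔ ∃ h : w ≠ v, G'.Reachable x ⟨w, h⟩ := by
    intro w; simp [hC]
  have hvC : v ∉ C := by
    rw [hCmem]; rintro ⟨h, -⟩; exact h rfl
  have hclose : ∀ ⦃a b : V⦄, a ∈ C → b ∉ C → b ≠ v → ¬ G.Adj a b := by
    intro a b ha hb hbv hadj
    obtain ⟨hav, hra⟩ := (hCmem a).mp ha
    exact hb ((hCmem b).mpr ⟨hbv,
      hra.trans (SimpleGraph.Adj.reachable
        (show G'.Adj ⟨a, hav⟩ ⟨b, hbv⟩ from hadj))⟩)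
  have hxC : (x : V) ∈ C := (hCmem _).mpr ⟨x.2, by exact SimpleGraph.Reachable.refl _⟩
  have hyC : (y : V) ∉ C := by
    rw [hCmem]; rintro ⟨h, hr⟩; exact hxy hr
  -- neighbors of v in each component
  obtain ⟨p₁⟩ := hconn.preconnected (x : V) v
  obtain ⟨b₁, hb₁v, hadj₁, hr₁⟩ := reach_nbr G v (x : V) p₁ x.2
  have hb₁C : b₁ ∈ C := (hCmem _).mpr ⟨hb₁v, hr₁⟩
  have hb₁B : b₁ ∈ B := by
    have : b₁ ∈ A ∪ B := hU ▸ Finset.mem_univ b₁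
    rcases Finset.mem_union.mp this with hA | hB
    · exact absurd hadj₁ (hIA v hv b₁ hA)
    · exact hB
  obtain ⟨p₂⟩ := hconn.preconnected (y : V) v
  obtain ⟨b₂, hb₂v, hadj₂, hr₂⟩ := reach_nbr G v (y : V) p₂ y.2
  have hb₂C : b₂ ∉ C := by
    rw [hCmem]; rintro ⟨h, hr⟩; exact hxy (hr.trans hr₂.symm)
  have hb₂B : b₂ ∈ B := by
    have : b₂ ∈ A ∪ B := hU ▸ Finset.mem_univ b₂
    rcases Finset.mem_union.mp this with hA | hB
    · exact absurd hadj₂ (hIA v hv b₂ hA)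
    · exact hB
  -- the two swapped sets
  set S : Finset V := (B ∩ C) ∪ (A \ insert v C) with hS
  set S' : Finset V := (A ∩ C) ∪ (B \ C) with hS'
  -- cardinalities
  have hdisjS : Disjoint (B ∩ C) (A \ insert v C) :=
    hD.symm.mono Finset.inter_subset_left Finset.sdiff_subset
  have hdisjS' : Disjoint (A ∩ C) (B \ C) :=
    hD.mono Finset.inter_subset_left Finset.sdiff_subset
  have hScard : S.card = (B ∩ C).card + (A \ insert v C).card :=
    Finset.card_union_of_disjoint hdisjS
  have hS'card : S'.card = (A ∩ C).card + (B \ C).card :=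
    Finset.card_union_of_disjoint hdisjS'
  have hBsplit : (B ∩ C).card + (B \ C).card = B.card :=
    Finset.card_inter_add_card_sdiff B C
  have hAsplit0 : (A ∩ C).card + (A \ C).card = A.card :=
    Finset.card_inter_add_card_sdiff A C
  have hvAC : v ∈ A \ C := Finset.mem_sdiff.mpr ⟨hv, hvC⟩
  have hAins : A \ insert v C = (A \ C).erase v := by
    ext a
    simp only [Finset.mem_sdiff, Finset.mem_insert, Finset.mem_erase]
    tauto
  have hAerase : (A \ insert v C).card = (A \ C).card - 1 := by
    rw [hAins, Finset.card_erase_of_mem hvAC]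
  have hACpos : 1 ≤ (A \ C).card := Finset.card_pos.mpr ⟨v, hvAC⟩
  have hApos : 1 ≤ A.card := Finset.card_pos.mpr ⟨v, hv⟩
  have hsum : S.card + S'.card + 1 = 2 * A.card := by
    rw [hScard, hS'card, hAerase]
    omega
  -- independence of S
  have hindS : IsIndepSet G S := by
    intro a ha b hb hadj
    rcases Finset.mem_union.mp ha with ha | ha <;>
      rcases Finset.mem_union.mp hb with hb | hb
    · exact hIB a (Finset.mem_inter.mp ha).1 b (Finset.mem_inter.mp hb).1 hadj
    · obtain ⟨hbA, hbC⟩ := Finset.mem_sdiff.mp hb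
      have h1 : b ∉ C := fun h => hbC (Finset.mem_insert_of_mem h)
      have h2 : b ≠ v := fun h => hbC (h ▸ Finset.mem_insert_self v C)
      exact hclose (Finset.mem_inter.mp ha).2 h1 h2 hadj
    · obtain ⟨haA, haC⟩ := Finset.mem_sdiff.mp ha
      have h1 : a ∉ C := fun h => haC (Finset.mem_insert_of_mem h)
      have h2 : a ≠ v := fun h => haC (h ▸ Finset.mem_insert_self v C)
      exact hclose (Finset.mem_inter.mp hb).2 h1 h2 hadj.symm
    · exact hIA a (Finset.mem_sdiff.mp ha).1 b (Finset.mem_sdiff.mp hb).1 hadj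
  -- independence of S'
  have hindS' : IsIndepSet G S' := by
    intro a ha b hb hadj
    rcases Finset.mem_union.mp ha with ha | ha <;>
      rcases Finset.mem_union.mp hb with hb | hb
    · exact hIA a (Finset.mem_inter.mp ha).1 b (Finset.mem_inter.mp hb).1 hadj
    · obtain ⟨hbB, hbC⟩ := Finset.mem_sdiff.mp hb
      have h2 : b ≠ v := fun h => Finset.disjoint_left.mp hD hv (h ▸ hbB)
      exact hclose (Finset.mem_inter.mp ha).2 hbC h2 hadj
    · obtain ⟨haB, haC⟩ := Finset.mem_sdiff.mp ha
      have h2 : a ≠ v := fun h => Finset.disjoint_left.mp hD hv (h ▸ haB)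
      exact hclose (Finset.mem_inter.mp hb).2 haC h2 hadj.symm
    · exact hIB a (Finset.mem_sdiff.mp ha).1 b (Finset.mem_sdiff.mp hb).1 hadj
  have hb₁S : b₁ ∈ S := Finset.mem_union_left _ (Finset.mem_inter.mpr ⟨hb₁B, hb₁C⟩)
  have hb₂S' : b₂ ∈ S' := Finset.mem_union_right _ (Finset.mem_sdiff.mpr ⟨hb₂B, hb₂C⟩)
  have hcases : A.card ≤ S.card ∨ A.card ≤ S'.card := by omega
  rcases hcases with hle | hle
  · rcases hmax S hindS hle with hSA | hSB
    · exact Finset.disjoint_left.mp hD (hSA ▸ hb₁S) hb₁B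
    · -- S = B; y gives contradiction
      have hyU : (y : V) ∈ A ∪ B := hU ▸ Finset.mem_univ _
      rcases Finset.mem_union.mp hyU with hyA | hyB
      · have hymem : (y : V) ∈ S := by
          refine Finset.mem_union_right _ (Finset.mem_sdiff.mpr ⟨hyA, ?_⟩)
          intro hins
          rcases Finset.mem_insert.mp hins with h | h
          · exact y.2 h
          · exact hyC h
        rw [hSB] at hymem
        exact Finset.disjoint_left.mp hD hyA hymem
      · have hymem : (y : V) ∈ S := hSB ▸ hyB
        rcases Finset.mem_union.mp hymem with h | h
        · exact hyC (Finset.mem_inter.mp h).2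
        · exact Finset.disjoint_left.mp hD (Finset.mem_sdiff.mp h).1 hyB
  · rcases hmax S' hindS' hle with hSA | hSB
    · exact Finset.disjoint_left.mp hD (hSA ▸ hb₂S') hb₂B
    · have hb₁mem : b₁ ∈ S' := hSB ▸ hb₁B
      rcases Finset.mem_union.mp hb₁mem with h | h
      · exact Finset.disjoint_left.mp hD (Finset.mem_inter.mp h).1 hb₁B
      · exact (Finset.mem_sdiff.mp h).2 hb₁C

/-- every bistable graph with at least two vertices is biconnected:
deleting any single vertex leaves the graph connected. -/
theorem bistable_biconnected {V : Type*} [Fintype V] [DecidableEq V]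
    (G : SimpleGraph V) (h : IsBistable G) (hcard : 2 ≤ Fintype.card V) :
    ∀ v : V, ((G.induce {w : V | w ≠ v})).Connected := by
  obtain ⟨hconn, A, B, hU, hD, _, hAB, hIA, hIB, hmax⟩ := h
  intro v
  have hvU : v ∈ A ∪ B := hU ▸ Finset.mem_univ v
  rcases Finset.mem_union.mp hvU with hvA | hvB
  · exact bistable_aux G hconn A B hU hD hmax hIA hIB hAB hcard v hvA
  · refine bistable_aux G hconn B A ?_ hD.symm ?_ hIB hIA hAB.symm hcard v hvB
    · rw [Finset.union_comm]; exact hU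
    · intro S hS hle
      exact (hmax S hS (hAB ▸ hle)).symm
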